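/- Fix m₀ ∈ ℕ. Then #{d ∈ ℕ : φ(d) ≤ m₀} = O(m₀), where φ is Euler's totient function. More precisely, #{d : φ(d) ≤ m₀} ≤ m₀ + ∑_{d > m₀} (m₀/φ(d))², and ∑_{d ≤ x}(d/φ(d))² = O(x) for all x ≥ 1. -/

import Mathlib

open Nat

open Finset

noncomputable def auxV (p : ℕ) : ℝ := (2 * p - 1) / ((p : ℝ) - 1) ^ 2

noncomputable def auxW (e : ℕ) : ℝ :=
  if Squarefree e then ∏ p ∈ e.primeFactors, auxV p else 0

noncomputable def auxG (d : ℕ) : ℝ := ((d : ℝ) / Nat.totient d) ^ 2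

lemma auxV_nonneg {p : ℕ} (hp : 1 ≤ p) : 0 ≤ auxV p := by
  have : (1:ℝ) ≤ p := by exact_mod_cast hp
  unfold auxV
  apply div_nonneg (by linarith) (by positivity)

lemma auxW_nonneg (e : ℕ) : 0 ≤ auxW e := by
  unfold auxW
  split
  · exact prod_nonneg fun p hp => auxV_nonneg (Nat.prime_of_mem_primeFactors hp).one_lt.le
  · exact le_refl _

lemma squarefree_prod_primes {s : Finset ℕ} (hs : ∀ p ∈ s, p.Prime) :
    Squarefree (∏ p ∈ s, p) := by
  classical
  induction s using Finset.cons_induction with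
  | empty => simpa using squarefree_one
  | cons a s ha ih =>
    rw [Finset.prod_cons]
    have hap : a.Prime := hs a (Finset.mem_cons_self a s)
    have hcop : a.Coprime (∏ p ∈ s, p) := by
      rw [Nat.Prime.coprime_iff_not_dvd hap]
      intro hdvd
      obtain ⟨q, hq, hqd⟩ := (Nat.Prime.prime hap).exists_mem_finset_dvd hdvd
      have := ((hs q (Finset.mem_cons_of_mem hq)).dvd_iff_eq hap.ne_one).1 hqd
      exact ha (this ▸ hq)
    exact (Nat.squarefree_mul hcop).2
      ⟨hap.prime.squarefree, ih fun p hp => hs p (Finset.mem_cons_of_mem hp)⟩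


lemma aux_ratio (d : ℕ) (hd : 1 ≤ d) :
    (d : ℝ) / Nat.totient d = ∏ p ∈ d.primeFactors, (p : ℝ) / ((p : ℝ) - 1) := by
  have hφ : 0 < Nat.totient d := Nat.totient_pos.2 hd
  have h := Nat.totient_mul_prod_primeFactors d
  have hcast : ((Nat.totient d : ℝ)) * ∏ p ∈ d.primeFactors, (p : ℝ)
      = (d : ℝ) * ∏ p ∈ d.primeFactors, ((p : ℝ) - 1) := by
    calc ((Nat.totient d : ℝ)) * ∏ p ∈ d.primeFactors, (p : ℝ)
        = ((Nat.totient d * ∏ p ∈ d.primeFactors, p : ℕ) : ℝ) := by push_cast; ring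
      _ = ((d * ∏ p ∈ d.primeFactors, (p - 1) : ℕ) : ℝ) := by rw [h]
      _ = (d : ℝ) * ∏ p ∈ d.primeFactors, ((p : ℝ) - 1) := by
          push_cast
          rw [Finset.prod_congr rfl fun p hp => ?_]
          rw [Nat.cast_sub (Nat.prime_of_mem_primeFactors hp).one_lt.le, Nat.cast_one]
  have hprod : (0:ℝ) < ∏ p ∈ d.primeFactors, ((p : ℝ) - 1) := by
    apply Finset.prod_pos
    intro p hp
    have : (2:ℝ) ≤ p := by exact_mod_cast (Nat.prime_of_mem_primeFactors hp).two_le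
    linarith
  have hprodp : (0:ℝ) < ∏ p ∈ d.primeFactors, (p : ℝ) := by
    apply Finset.prod_pos
    intro p hp
    exact_mod_cast (Nat.prime_of_mem_primeFactors hp).pos
  rw [Finset.prod_div_distrib]
  rw [div_eq_div_iff (by exact_mod_cast hφ.ne') hprod.ne']
  linarith [hcast]


lemma auxG_le (d : ℕ) (hd : 1 ≤ d) : auxG d ≤ ∑ e ∈ d.divisors, auxW e := by
  classical
  have hprime : ∀ p ∈ d.primeFactors, p.Prime := fun p hp => Nat.prime_of_mem_primeFactors hp
  have step1 : auxG d = ∏ p ∈ d.primeFactors, (auxV p + 1) := by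
    rw [auxG, aux_ratio d hd, ← Finset.prod_pow]
    refine Finset.prod_congr rfl fun p hp => ?_
    have h2 : (2:ℝ) ≤ p := by exact_mod_cast (hprime p hp).two_le
    rw [auxV, div_pow, div_add' _ _ _ (by nlinarith)]
    congr 1
    ring
  have step2 : ∏ p ∈ d.primeFactors, (auxV p + 1)
      = ∑ t ∈ d.primeFactors.powerset, ∏ p ∈ t, auxV p := by
    rw [Finset.prod_add]
    simp
  have step3 : ∀ t ∈ d.primeFactors.powerset, ∏ p ∈ t, auxV p = auxW (∏ p ∈ t, p) := by
    intro t ht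
    rw [Finset.mem_powerset] at ht
    have hp : ∀ p ∈ t, p.Prime := fun p hp => hprime p (ht hp)
    rw [auxW, if_pos (squarefree_prod_primes hp), Nat.primeFactors_prod hp]
  have step4 : ∑ t ∈ d.primeFactors.powerset, auxW (∏ p ∈ t, p)
      = ∑ e ∈ d.primeFactors.powerset.image (fun t => ∏ p ∈ t, p), auxW e := by
    rw [Finset.sum_image]
    intro t ht u hu htu
    rw [Finset.mem_coe, Finset.mem_powerset] at ht hu
    have := congrArg Nat.primeFactors htu
    rwa [Nat.primeFactors_prod (fun p hp => hprime p (ht hp)),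
      Nat.primeFactors_prod (fun p hp => hprime p (hu hp))] at this
  have step5 : d.primeFactors.powerset.image (fun t => ∏ p ∈ t, p) ⊆ d.divisors := by
    intro e he
    rw [Finset.mem_image] at he
    obtain ⟨t, ht, rfl⟩ := he
    rw [Finset.mem_powerset] at ht
    rw [Nat.mem_divisors]
    exact ⟨(Finset.prod_dvd_prod_of_subset _ _ _ ht).trans (Nat.prod_primeFactors_dvd d),
      by omega⟩
  calc auxG d = ∑ t ∈ d.primeFactors.powerset, auxW (∏ p ∈ t, p) := by
        rw [step1, step2]; exact Finset.sum_congr rfl step3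
    _ = ∑ e ∈ d.primeFactors.powerset.image (fun t => ∏ p ∈ t, p), auxW e := step4
    _ ≤ ∑ e ∈ d.divisors, auxW e :=
        Finset.sum_le_sum_of_subset_of_nonneg step5 fun e _ _ => auxW_nonneg e

lemma auxSwap (F : ℕ → ℕ → ℝ) (N : ℕ) :
    ∑ d ∈ Icc 1 N, ∑ e ∈ d.divisors, F e d
      = ∑ e ∈ Icc 1 N, ∑ k ∈ Icc 1 (N / e), F e (e * k) := by
  rw [Finset.sum_sigma' (Icc 1 N) (fun d => d.divisors) (fun d e => F e d),
    Finset.sum_sigma' (Icc 1 N) (fun e => Icc 1 (N / e)) (fun e k => F e (e * k))]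
  apply Finset.sum_nbij' (fun x => (⟨x.2, x.1 / x.2⟩ : (_ : ℕ) × ℕ))
    (fun x => (⟨x.1 * x.2, x.1⟩ : (_ : ℕ) × ℕ))
  · rintro ⟨d, e⟩ h
    simp only [Finset.mem_sigma, Finset.mem_Icc, Nat.mem_divisors] at h ⊢
    obtain ⟨⟨hd1, hdN⟩, hed, hd0⟩ := h
    have he0 : 0 < e := Nat.pos_of_dvd_of_pos hed (by omega)
    have hed' : e ≤ d := Nat.le_of_dvd (by omega) hed
    refine ⟨⟨he0, hed'.trans hdN⟩, ?_, Nat.div_le_div_right hdN⟩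
    exact (Nat.one_le_div_iff he0).2 hed'
  · rintro ⟨e, k⟩ h
    simp only [Finset.mem_sigma, Finset.mem_Icc, Nat.mem_divisors] at h ⊢
    obtain ⟨⟨he1, heN⟩, hk1, hkN⟩ := h
    have : e * k ≤ N := by
      rw [mul_comm]
      exact (Nat.le_div_iff_mul_le (by omega)).1 hkN
    have hek : 0 < e * k := Nat.mul_pos (by omega) (by omega)
    exact ⟨⟨hek, this⟩, Dvd.intro k rfl, hek.ne'⟩
  · rintro ⟨d, e⟩ h
    simp only [Finset.mem_sigma, Finset.mem_Icc, Nat.mem_divisors] at h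
    obtain ⟨⟨hd1, hdN⟩, hed, hd0⟩ := h
    simp [Nat.mul_div_cancel' hed]
  · rintro ⟨e, k⟩ h
    simp only [Finset.mem_sigma, Finset.mem_Icc, Nat.mem_divisors] at h
    obtain ⟨⟨he1, heN⟩, hk1, hkN⟩ := h
    simp [Nat.mul_div_cancel_left k (by omega : 0 < e)]
  · rintro ⟨d, e⟩ h
    simp only [Finset.mem_sigma, Finset.mem_Icc, Nat.mem_divisors] at h
    obtain ⟨⟨hd1, hdN⟩, hed, hd0⟩ := h
    simp [Nat.mul_div_cancel' hed]

lemma auxTel {a : ℕ} (ha : 1 ≤ a) (K : ℕ) : ∑ k ∈ Ioc a K, (1:ℝ)/(k:ℝ)^2 ≤ 1/a := by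
  rcases le_or_gt K a with h | h
  · rw [Finset.Ioc_eq_empty (by omega)]
    simp only [Finset.sum_empty]
    positivity
  · have key : ∀ K, a ≤ K → ∑ k ∈ Ioc a K, (1:ℝ)/(k:ℝ)^2 ≤ 1/a - 1/K := by
      intro K
      induction K with
      | zero => intro h0; omega
      | succ K ih =>
        intro hK
        rcases Nat.lt_or_ge a (K + 1) with h' | h'
        · have haK : a ≤ K := by omega
          rw [Finset.sum_Ioc_succ_top haK]
          have hKpos : 1 ≤ K := le_trans ha haK
          have h1 : (1:ℝ) ≤ K := by exact_mod_cast hKpos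
          have := ih haK
          have hstep : (1:ℝ)/((K:ℝ)+1)^2 ≤ 1/K - 1/((K:ℝ)+1) := by
            rw [div_sub_div _ _ (by positivity) (by positivity)]
            rw [div_le_div_iff₀ (by positivity) (by positivity)]
            ring_nf
            nlinarith
          push_cast
          linarith
        · have hIoc : Ioc a (K + 1) = ∅ := Finset.Ioc_eq_empty (by omega)
          have haa : (a:ℝ) = (K:ℝ) + 1 := by exact_mod_cast congrArg (Nat.cast (R := ℝ)) (by omega : a = K + 1)
          rw [hIoc]
          simp only [Finset.sum_empty]
          push_cast
          rw [haa]
          simp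
    have := key K h.le
    have hK1 : (1:ℝ) ≤ K := by exact_mod_cast le_trans ha h.le
    have : (0:ℝ) < K := by linarith
    have := key K h.le
    have : (0:ℝ) ≤ 1/(K:ℝ) := by positivity
    linarith [key K h.le]

lemma auxTel2 (K : ℕ) : ∑ k ∈ Icc 1 K, (1:ℝ)/(k:ℝ)^2 ≤ 2 := by
  rcases Nat.lt_or_ge K 1 with h | h
  · interval_cases K <;> simp
  · rw [Finset.Icc_eq_cons_Ioc h, Finset.sum_cons]
    have := auxTel le_rfl K
    norm_num at this ⊢
    linarith

lemma auxV_div_le {p : ℕ} (hp : p.Prime) : auxV p / p ≤ 8 / (p:ℝ)^2 := by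
  have h2 : (2:ℝ) ≤ p := by exact_mod_cast hp.two_le
  rw [auxV, div_div, div_le_div_iff₀ (by nlinarith) (by positivity)]
  nlinarith

lemma auxEuler (N : ℕ) : ∑ e ∈ Icc 1 N, auxW e / e ≤ Real.exp 8 := by
  classical
  set P : Finset ℕ := (Icc 1 N).filter Nat.Prime with hP
  have hPprime : ∀ p ∈ P, p.Prime := fun p hp => (Finset.mem_filter.1 hp).2
  -- restrict to squarefree
  have h1 : ∑ e ∈ Icc 1 N, auxW e / e
      = ∑ e ∈ (Icc 1 N).filter Squarefree, auxW e / e := by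
    rw [Finset.sum_filter_of_ne]
    intro e _ he
    by_contra hsq
    rw [auxW, if_neg hsq] at he
    simp at he
  have h2 : ∀ e ∈ (Icc 1 N).filter Squarefree,
      auxW e / e = ∏ p ∈ e.primeFactors, (auxV p / p) := by
    intro e he
    rw [Finset.mem_filter] at he
    obtain ⟨he1, hsq⟩ := he
    rw [auxW, if_pos hsq, Finset.prod_div_distrib]
    congr 1
    rw [← Nat.cast_prod, Nat.prod_primeFactors_of_squarefree hsq]
  rw [h1, Finset.sum_congr rfl h2]
  -- reindex by prime factors
  have hinj : Set.InjOn Nat.primeFactors ((Icc 1 N).filter Squarefree) := by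
    intro a ha b hb hab
    rw [Finset.coe_filter, Set.mem_setOf_eq] at ha hb
    rw [← Nat.prod_primeFactors_of_squarefree ha.2, ← Nat.prod_primeFactors_of_squarefree hb.2,
      hab]
  have himg : ∑ e ∈ (Icc 1 N).filter Squarefree, ∏ p ∈ e.primeFactors, (auxV p / p)
      = ∑ S ∈ ((Icc 1 N).filter Squarefree).image Nat.primeFactors, ∏ p ∈ S, (auxV p / p) :=
    (Finset.sum_image (f := fun S => ∏ p ∈ S, (auxV p / p)) (g := Nat.primeFactors) (fun a ha b hb hab => hinj ha hb hab)).symm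
  rw [himg]
  have hsub : ((Icc 1 N).filter Squarefree).image Nat.primeFactors ⊆ P.powerset := by
    intro S hS
    rw [Finset.mem_image] at hS
    obtain ⟨e, he, rfl⟩ := hS
    rw [Finset.mem_filter, Finset.mem_Icc] at he
    rw [Finset.mem_powerset]
    intro p hp
    have hpp := Nat.prime_of_mem_primeFactors hp
    have hpd := Nat.dvd_of_mem_primeFactors hp
    have : p ≤ e := Nat.le_of_dvd (by omega) hpd
    rw [hP, Finset.mem_filter, Finset.mem_Icc]
    exact ⟨⟨hpp.one_lt.le, le_trans this he.1.2⟩, hpp⟩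
  have hnonneg : ∀ S ∈ P.powerset, 0 ≤ ∏ p ∈ S, (auxV p / p) := by
    intro S hS
    rw [Finset.mem_powerset] at hS
    apply Finset.prod_nonneg
    intro p hp
    have := (hPprime p (hS hp)).one_lt.le
    exact div_nonneg (auxV_nonneg this) (by positivity)
  calc ∑ S ∈ ((Icc 1 N).filter Squarefree).image Nat.primeFactors, ∏ p ∈ S, (auxV p / p)
      ≤ ∑ S ∈ P.powerset, ∏ p ∈ S, (auxV p / p) :=
        Finset.sum_le_sum_of_subset_of_nonneg hsub fun S hS _ => hnonneg S hS
    _ = ∏ p ∈ P, (auxV p / p + 1) := by rw [Finset.prod_add]; simp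
    _ ≤ ∏ p ∈ P, Real.exp (8 / (p:ℝ)^2) := by
        apply Finset.prod_le_prod
        · intro p hp
          have := (hPprime p hp).one_lt.le
          have h0 := div_nonneg (auxV_nonneg this) (show (0:ℝ) ≤ p by positivity)
          linarith
        · intro p hp
          calc auxV p / p + 1 ≤ 8 / (p:ℝ)^2 + 1 := by
                linarith [auxV_div_le (hPprime p hp)]
            _ ≤ Real.exp (8 / (p:ℝ)^2) := by
                have := Real.add_one_le_exp (8 / (p:ℝ)^2)
                linarith
    _ = Real.exp (∑ p ∈ P, 8 / (p:ℝ)^2) := (Real.exp_sum P _).symm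
    _ ≤ Real.exp 8 := by
        apply Real.exp_le_exp.2
        have hsub2 : P ⊆ Ioc 1 N := by
          intro p hp
          have hpp := hPprime p hp
          rw [hP, Finset.mem_filter, Finset.mem_Icc] at hp
          rw [Finset.mem_Ioc]
          exact ⟨hpp.one_lt, hp.1.2⟩
        have hle : ∑ p ∈ P, 8 / (p:ℝ)^2 ≤ ∑ p ∈ Ioc 1 N, 8 / (p:ℝ)^2 := by
          apply Finset.sum_le_sum_of_subset_of_nonneg hsub2
          intro p hp _
          positivity
        have h8 : ∑ p ∈ Ioc 1 N, 8 / (p:ℝ)^2 = 8 * ∑ p ∈ Ioc 1 N, (1:ℝ)/(p:ℝ)^2 := by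
          rw [Finset.mul_sum]
          exact Finset.sum_congr rfl fun p _ => by ring
        have htel := auxTel le_rfl N
        simp only [Nat.cast_one, div_one] at htel
        linarith

lemma auxMain (N : ℕ) : ∑ d ∈ Icc 1 N, auxG d ≤ Real.exp 8 * N := by
  calc ∑ d ∈ Icc 1 N, auxG d ≤ ∑ d ∈ Icc 1 N, ∑ e ∈ d.divisors, auxW e := by
        apply Finset.sum_le_sum
        intro d hd
        exact auxG_le d (Finset.mem_Icc.1 hd).1
    _ = ∑ e ∈ Icc 1 N, ∑ k ∈ Icc 1 (N / e), auxW e := auxSwap (fun e _ => auxW e) N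
    _ = ∑ e ∈ Icc 1 N, auxW e * (N / e : ℕ) := by
        apply Finset.sum_congr rfl
        intro e _
        rw [Finset.sum_const, Nat.card_Icc]
        simp [mul_comm]
    _ ≤ ∑ e ∈ Icc 1 N, auxW e / e * N := by
        apply Finset.sum_le_sum
        intro e he
        have he1 : (1:ℝ) ≤ e := by exact_mod_cast (Finset.mem_Icc.1 he).1
        have : ((N / e : ℕ) : ℝ) ≤ (N : ℝ) / e := Nat.cast_div_le
        calc auxW e * ((N / e : ℕ) : ℝ) ≤ auxW e * ((N : ℝ) / e) := by
              exact mul_le_mul_of_nonneg_left this (auxW_nonneg e)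
          _ = auxW e / e * N := by ring
    _ = (∑ e ∈ Icc 1 N, auxW e / e) * N := by rw [Finset.sum_mul]
    _ ≤ Real.exp 8 * N := by
        apply mul_le_mul_of_nonneg_right (auxEuler N) (by positivity)

lemma auxInner {e m : ℕ} (he : 1 ≤ e) (hm : 1 ≤ m) (K : ℕ) :
    ∑ k ∈ Icc 1 K, (if m < e * k then (1:ℝ)/(k:ℝ)^2 else 0) ≤ 2 * e / m := by
  classical
  have hme : (0:ℝ) < m := by exact_mod_cast hm
  have hee : (1:ℝ) ≤ e := by exact_mod_cast he
  have hsum : ∑ k ∈ Icc 1 K, (if m < e * k then (1:ℝ)/(k:ℝ)^2 else 0)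
      = ∑ k ∈ (Icc 1 K).filter (fun k => m / e < k), (1:ℝ)/(k:ℝ)^2 := by
    rw [Finset.sum_filter]
    apply Finset.sum_congr rfl
    intro k _
    congr 1
    rw [eq_iff_iff, Nat.div_lt_iff_lt_mul (by omega), mul_comm]
  rw [hsum]
  have hsub : (Icc 1 K).filter (fun k => m / e < k) ⊆ Ioc (m / e) K := by
    intro k hk
    rw [Finset.mem_filter, Finset.mem_Icc] at hk
    rw [Finset.mem_Ioc]
    exact ⟨hk.2, hk.1.2⟩
  have hle : ∑ k ∈ (Icc 1 K).filter (fun k => m / e < k), (1:ℝ)/(k:ℝ)^2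
      ≤ ∑ k ∈ Ioc (m / e) K, (1:ℝ)/(k:ℝ)^2 :=
    Finset.sum_le_sum_of_subset_of_nonneg hsub fun k _ _ => by positivity
  rcases Nat.eq_zero_or_pos (m / e) with h0 | hpos
  · -- e > m : bound by 2 and 2 ≤ 2e/m
    have hIoc : Ioc (0:ℕ) K = Icc 1 K := rfl
    have h2 := auxTel2 K
    have hme' : m < e := by
      by_contra hc
      push_neg at hc
      have : 1 ≤ m / e := (Nat.one_le_div_iff (by omega)).2 hc
      omega
    have : (m:ℝ) ≤ e := by exact_mod_cast hme'.le
    have h2e : (2:ℝ) ≤ 2 * e / m := by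
      rw [le_div_iff₀ hme]
      nlinarith
    calc _ ≤ ∑ k ∈ Ioc (m/e) K, (1:ℝ)/(k:ℝ)^2 := hle
      _ = ∑ k ∈ Icc 1 K, (1:ℝ)/(k:ℝ)^2 := by rw [h0, hIoc]
      _ ≤ 2 := h2
      _ ≤ 2 * e / m := h2e
  · have htel := auxTel hpos K
    have hma : m < (m / e + 1) * e := (Nat.div_lt_iff_lt_mul (by omega : 0 < e)).1 (Nat.lt_succ_self _)
    have hcast : (m:ℝ) < ((m/e:ℕ):ℝ) * e + e := by
      have := hma
      have : (m:ℝ) < (((m / e + 1) * e : ℕ) : ℝ) := by exact_mod_cast this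
      push_cast at this
      linarith
    have hapos : (0:ℝ) < ((m/e:ℕ):ℝ) := by exact_mod_cast hpos
    have h1a : 1/((m/e:ℕ):ℝ) ≤ 2 * e / m := by
      rw [div_le_div_iff₀ hapos hme]
      -- m ≤ 2 e (m/e) : since m < (m/e) e + e ≤ 2 (m/e) e  (as m/e ≥ 1, e ≥ 1)
      have h1a' : (1:ℝ) ≤ ((m/e:ℕ):ℝ) := by exact_mod_cast hpos
      nlinarith
    calc _ ≤ ∑ k ∈ Ioc (m/e) K, (1:ℝ)/(k:ℝ)^2 := hle
      _ ≤ 1/((m/e:ℕ):ℝ) := htel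
      _ ≤ 2 * e / m := h1a

lemma auxG_nonneg (d : ℕ) : 0 ≤ auxG d := by unfold auxG; positivity

lemma auxTail (N m : ℕ) (hm : 1 ≤ m) :
    ∑ d ∈ Icc 1 N, (if m < d then auxG d / (d:ℝ)^2 else 0) ≤ 2 * Real.exp 8 / m := by
  classical
  have hmr : (0:ℝ) < m := by exact_mod_cast hm
  have step1 : ∑ d ∈ Icc 1 N, (if m < d then auxG d / (d:ℝ)^2 else 0)
      ≤ ∑ d ∈ Icc 1 N, ∑ e ∈ d.divisors, (if m < d then auxW e / (d:ℝ)^2 else 0) := by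
    apply Finset.sum_le_sum
    intro d hd
    have hd1 : 1 ≤ d := (Finset.mem_Icc.1 hd).1
    by_cases h : m < d
    · simp only [if_pos h]
      rw [← Finset.sum_div]
      apply div_le_div_of_nonneg_right (auxG_le d hd1)
      have : (1:ℝ) ≤ d := by exact_mod_cast hd1
      positivity
    · simp only [if_neg h, Finset.sum_const_zero, le_refl]
  have step2 : ∑ d ∈ Icc 1 N, ∑ e ∈ d.divisors, (if m < d then auxW e / (d:ℝ)^2 else 0)
      = ∑ e ∈ Icc 1 N, ∑ k ∈ Icc 1 (N / e), (if m < e * k then auxW e / ((e * k : ℕ):ℝ)^2 else 0) :=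
    auxSwap (fun e d => if m < d then auxW e / (d:ℝ)^2 else 0) N
  have step3 : ∀ e ∈ Icc 1 N,
      ∑ k ∈ Icc 1 (N / e), (if m < e * k then auxW e / ((e * k : ℕ):ℝ)^2 else 0)
        ≤ auxW e / e * (2 / m) := by
    intro e he
    have he1 : 1 ≤ e := (Finset.mem_Icc.1 he).1
    have her : (1:ℝ) ≤ e := by exact_mod_cast he1
    have heq : ∀ k : ℕ, (if m < e * k then auxW e / ((e * k : ℕ):ℝ)^2 else 0)
        = auxW e / (e:ℝ)^2 * (if m < e * k then (1:ℝ)/(k:ℝ)^2 else 0) := by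
      intro k
      by_cases h : m < e * k
      · have hk1 : 1 ≤ k := by
          rcases Nat.eq_zero_or_pos k with rfl | h'
          · omega
          · exact h'
        have hkr : (1:ℝ) ≤ k := by exact_mod_cast hk1
        rw [if_pos h, if_pos h]
        push_cast
        field_simp
      · rw [if_neg h, if_neg h, mul_zero]
    calc ∑ k ∈ Icc 1 (N / e), (if m < e * k then auxW e / ((e * k : ℕ):ℝ)^2 else 0)
        = auxW e / (e:ℝ)^2 * ∑ k ∈ Icc 1 (N / e), (if m < e * k then (1:ℝ)/(k:ℝ)^2 else 0) := by
          rw [Finset.mul_sum]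
          exact Finset.sum_congr rfl fun k _ => heq k
      _ ≤ auxW e / (e:ℝ)^2 * (2 * e / m) := by
          apply mul_le_mul_of_nonneg_left (auxInner he1 hm (N / e))
          have := auxW_nonneg e
          positivity
      _ = auxW e / e * (2 / m) := by
          field_simp
  calc ∑ d ∈ Icc 1 N, (if m < d then auxG d / (d:ℝ)^2 else 0)
      ≤ ∑ e ∈ Icc 1 N, ∑ k ∈ Icc 1 (N / e), (if m < e * k then auxW e / ((e * k : ℕ):ℝ)^2 else 0) := by
        rw [← step2]; exact step1
    _ ≤ ∑ e ∈ Icc 1 N, auxW e / e * (2 / m) := Finset.sum_le_sum step3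
    _ = (∑ e ∈ Icc 1 N, auxW e / e) * (2 / m) := by rw [Finset.sum_mul]
    _ ≤ Real.exp 8 * (2 / m) := by
        apply mul_le_mul_of_nonneg_right (auxEuler N) (by positivity)
    _ = 2 * Real.exp 8 / m := by ring

noncomputable def auxF (m d : ℕ) : ℝ := if m < d then ((m : ℝ) / Nat.totient d) ^ 2 else 0

lemma auxF_nonneg (m d : ℕ) : 0 ≤ auxF m d := by
  unfold auxF; split
  · positivity
  · exact le_refl _

lemma auxF_eq (m d : ℕ) : auxF m d = (m:ℝ)^2 * (if m < d then auxG d / (d:ℝ)^2 else 0) := by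
  unfold auxF
  by_cases h : m < d
  · rw [if_pos h, if_pos h]
    have hd1 : 1 ≤ d := by omega
    have hφ : 0 < Nat.totient d := Nat.totient_pos.2 hd1
    have hφr : (0:ℝ) < Nat.totient d := by exact_mod_cast hφ
    have hdr : (0:ℝ) < d := by exact_mod_cast hd1
    rw [auxG]
    field_simp
  · rw [if_neg h, if_neg h, mul_zero]

lemma auxFsum (m : ℕ) (hm : 1 ≤ m) (s : Finset ℕ) :
    ∑ d ∈ s, auxF m d ≤ 2 * Real.exp 8 * m := by
  classical
  have hmr : (0:ℝ) < m := by exact_mod_cast hm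
  set N := s.sup id with hN
  have h1 : ∑ d ∈ s, auxF m d = ∑ d ∈ s.filter (fun d => 1 ≤ d), auxF m d := by
    rw [Finset.sum_filter_of_ne]
    intro d _ hne
    by_contra h
    push_neg at h
    interval_cases d
    simp [auxF] at hne
  have hsub : s.filter (fun d => 1 ≤ d) ⊆ Icc 1 N := by
    intro d hd
    rw [Finset.mem_filter] at hd
    rw [Finset.mem_Icc]
    exact ⟨hd.2, Finset.le_sup (f := id) hd.1⟩
  have h2 : ∑ d ∈ s.filter (fun d => 1 ≤ d), auxF m d ≤ ∑ d ∈ Icc 1 N, auxF m d :=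
    Finset.sum_le_sum_of_subset_of_nonneg hsub fun d _ _ => auxF_nonneg m d
  have h3 : ∑ d ∈ Icc 1 N, auxF m d
      = (m:ℝ)^2 * ∑ d ∈ Icc 1 N, (if m < d then auxG d / (d:ℝ)^2 else 0) := by
    rw [Finset.mul_sum]
    exact Finset.sum_congr rfl fun d _ => auxF_eq m d
  have h4 := auxTail N m hm
  calc ∑ d ∈ s, auxF m d ≤ ∑ d ∈ Icc 1 N, auxF m d := by rw [h1]; exact h2
    _ = (m:ℝ)^2 * ∑ d ∈ Icc 1 N, (if m < d then auxG d / (d:ℝ)^2 else 0) := h3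
    _ ≤ (m:ℝ)^2 * (2 * Real.exp 8 / m) := by
        apply mul_le_mul_of_nonneg_left h4 (by positivity)
    _ = 2 * Real.exp 8 * m := by field_simp

lemma auxSummable (m : ℕ) : Summable (auxF m) := by
  rcases Nat.eq_zero_or_pos m with rfl | hm
  · have : auxF 0 = fun _ => 0 := by
      funext d
      unfold auxF
      split <;> simp
    rw [this]
    exact summable_zero
  · exact summable_of_sum_range_le (fun d => auxF_nonneg m d)
      (fun n => auxFsum m hm (Finset.range n))

lemma auxTsumLe (m : ℕ) (hm : 1 ≤ m) : ∑' d, auxF m d ≤ 2 * Real.exp 8 * m := by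
  apply tsum_le_of_sum_le' (by positivity) (auxFsum m hm)

lemma auxPart1 (m : ℕ) : (({d : ℕ | 1 ≤ d ∧ Nat.totient d ≤ m}.ncard : ℝ))
    ≤ (m : ℝ) + ∑' d, auxF m d := by
  classical
  by_cases hfin : {d : ℕ | 1 ≤ d ∧ Nat.totient d ≤ m}.Finite
  · set F := hfin.toFinset with hF
    have hcard : {d : ℕ | 1 ≤ d ∧ Nat.totient d ≤ m}.ncard = F.card :=
      Set.ncard_eq_toFinset_card _ hfin
    set T := F.filter (fun d => m < d) with hT
    have hsubset : F ⊆ Icc 1 m ∪ T := by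
      intro d hd
      have hd' := (Set.Finite.mem_toFinset hfin).1 hd
      rcases le_or_gt d m with h | h
      · exact Finset.mem_union_left _ (Finset.mem_Icc.2 ⟨hd'.1, h⟩)
      · exact Finset.mem_union_right _ (Finset.mem_filter.2 ⟨hd, h⟩)
    have hcard2 : F.card ≤ m + T.card := by
      calc F.card ≤ (Icc 1 m ∪ T).card := Finset.card_le_card hsubset
        _ ≤ (Icc 1 m).card + T.card := Finset.card_union_le _ _
        _ = m + T.card := by rw [Nat.card_Icc]; omega
    have hTsum : (T.card : ℝ) ≤ ∑ d ∈ T, auxF m d := by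
      rw [Finset.card_eq_sum_ones T]
      push_cast
      apply Finset.sum_le_sum
      intro d hd
      rw [Finset.mem_filter] at hd
      have hd' := (Set.Finite.mem_toFinset hfin).1 hd.1
      have hφpos : 0 < Nat.totient d := Nat.totient_pos.2 hd'.1
      have hφr : (0:ℝ) < Nat.totient d := by exact_mod_cast hφpos
      have hone : (1:ℝ) ≤ (m:ℝ) / Nat.totient d := by
        rw [le_div_iff₀ hφr]
        norm_num
        exact_mod_cast hd'.2
      rw [auxF, if_pos hd.2]
      nlinarith
    have hTtsum : ∑ d ∈ T, auxF m d ≤ ∑' d, auxF m d :=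
      Summable.sum_le_tsum T (fun d _ => auxF_nonneg m d) (auxSummable m)
    calc (({d : ℕ | 1 ≤ d ∧ Nat.totient d ≤ m}.ncard : ℝ)) = (F.card : ℝ) := by
          rw [hcard]
      _ ≤ (m : ℝ) + (T.card : ℝ) := by exact_mod_cast hcard2
      _ ≤ (m : ℝ) + ∑' d, auxF m d := by linarith
  · rw [Set.Infinite.ncard hfin]
    push_cast
    exact add_nonneg (by positivity) (tsum_nonneg fun d => auxF_nonneg m d)

/-- `#{d : φ(d) ≤ m₀} = O(m₀)`; more precisely
`#{d : φ(d) ≤ m₀} ≤ m₀ + ∑_{d > m₀} (m₀/φ(d))²` and `∑_{d ≤ x} (d/φ(d))² = O(x)`. -/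
theorem stmt_5 :
    (∀ m₀ : ℕ, (({d : ℕ | 1 ≤ d ∧ Nat.totient d ≤ m₀}.ncard : ℝ)
        ≤ (m₀ : ℝ) + ∑' d : ℕ, if m₀ < d then ((m₀ : ℝ) / Nat.totient d) ^ 2 else 0)) ∧
    (∃ C : ℝ, 0 < C ∧ ∀ x : ℝ, 1 ≤ x →
        ∑ d ∈ Finset.Icc 1 ⌊x⌋₊, ((d : ℝ) / Nat.totient d) ^ 2 ≤ C * x) ∧
    (∃ C : ℝ, 0 < C ∧ ∀ m₀ : ℕ,
        (({d : ℕ | 1 ≤ d ∧ Nat.totient d ≤ m₀}.ncard : ℝ)) ≤ C * m₀) := by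
  refine ⟨fun m₀ => auxPart1 m₀, ⟨Real.exp 8, Real.exp_pos 8, fun x hx => ?_⟩,
    ⟨2 * Real.exp 8 + 1, by positivity, fun m₀ => ?_⟩⟩
  · calc ∑ d ∈ Finset.Icc 1 ⌊x⌋₊, ((d : ℝ) / Nat.totient d) ^ 2
        = ∑ d ∈ Finset.Icc 1 ⌊x⌋₊, auxG d := by rfl
      _ ≤ Real.exp 8 * ⌊x⌋₊ := auxMain ⌊x⌋₊
      _ ≤ Real.exp 8 * x := by
          apply mul_le_mul_of_nonneg_left (Nat.floor_le (by linarith)) (Real.exp_pos 8).le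
  · rcases Nat.eq_zero_or_pos m₀ with rfl | hm
    · have hempty : {d : ℕ | 1 ≤ d ∧ Nat.totient d ≤ 0} = ∅ := by
        ext d
        simp only [Set.mem_setOf_eq, Set.mem_empty_iff_false, iff_false, not_and]
        intro hd
        have := Nat.totient_pos.2 hd
        omega
      rw [hempty]
      simp
    · have h1 := auxPart1 m₀
      have h2 := auxTsumLe m₀ hm
      have hmr : (1:ℝ) ≤ m₀ := by exact_mod_cast hm
      calc (({d : ℕ | 1 ≤ d ∧ Nat.totient d ≤ m₀}.ncard : ℝ))
          ≤ (m₀ : ℝ) + ∑' d, auxF m₀ d := h1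
        _ ≤ (m₀ : ℝ) + 2 * Real.exp 8 * m₀ := by linarith
        _ = (2 * Real.exp 8 + 1) * m₀ := by ring
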